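/- For any integers t, l ≥ 1 and any n ≥ 2(t+l), there exists a real r×n matrix H with r = 2(t+l) rows such that ||Hz||₀ ≥ 2l+1 for every nonzero z ∈ ℝⁿ with ||z||₀ ≤ 2t; moreover no matrix with fewer rows has this property. -/

import Mathlib

open Matrix Finset

/-- Hamming weight (number of nonzero coordinates) of a real vector. -/
noncomputable def wt {m : ℕ} (v : Fin m → ℝ) : ℕ := (Finset.univ.filter (fun i => v i ≠ 0)).card

open Polynomial in
lemma cauchy_kernel {s : ℕ} {x y : Fin s → ℝ} (hx : Function.Injective x)
    (hy : Function.Injective y) (hxy : ∀ i j, x i + y j ≠ 0)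
    {c : Fin s → ℝ} (h : ∀ i, ∑ j, c j / (x i + y j) = 0) : c = 0 := by
  rcases Nat.eq_zero_or_pos s with hs | hs
  · funext j; exact absurd j.2 (by omega)
  set P : ℝ[X] := ∑ j, Polynomial.C (c j) * ∏ k ∈ Finset.univ.erase j, (X + Polynomial.C (y k))
    with hP
  have hdeg : P.natDegree < s := by
    have h1 : P.natDegree ≤ s - 1 := by
      apply Polynomial.natDegree_sum_le_of_forall_le
      intro j _
      calc (Polynomial.C (c j) * ∏ k ∈ Finset.univ.erase j, (X + Polynomial.C (y k))).natDegree
          ≤ (Polynomial.C (c j)).natDegree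
            + (∏ k ∈ Finset.univ.erase j, (X + Polynomial.C (y k))).natDegree :=
            Polynomial.natDegree_mul_le
        _ ≤ 0 + ∑ k ∈ Finset.univ.erase j, (X + Polynomial.C (y k)).natDegree := by
            gcongr
            · exact le_of_eq (Polynomial.natDegree_C _)
            · exact Polynomial.natDegree_prod_le _ _
        _ ≤ s - 1 := by
            simp only [Polynomial.natDegree_X_add_C, zero_add, Finset.sum_const, smul_eq_mul,
              mul_one]
            simp [Finset.card_erase_of_mem]
    omega
  have heval : ∀ i, P.eval (x i) = 0 := by
    intro i
    have key : ∀ j, c j * ∏ k ∈ Finset.univ.erase j, (x i + y k)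
        = c j / (x i + y j) * ∏ k, (x i + y k) := by
      intro j
      rw [← Finset.mul_prod_erase Finset.univ _ (Finset.mem_univ j)]
      rw [div_mul_eq_mul_div, mul_comm (x i + y j), ← mul_assoc,
        mul_div_assoc, div_self (hxy i j), mul_one]
    simp only [hP, Polynomial.eval_finset_sum, Polynomial.eval_mul, Polynomial.eval_C,
      Polynomial.eval_prod, Polynomial.eval_add, Polynomial.eval_X]
    rw [Finset.sum_congr rfl (fun j _ => key j), ← Finset.sum_mul, h i, zero_mul]
  have hP0 : P = 0 :=
    Polynomial.eq_zero_of_natDegree_lt_card_of_eval_eq_zero P hx heval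
      (by simpa using hdeg)
  funext j
  have hj := congrArg (Polynomial.eval (-(y j))) hP0
  simp only [hP, Polynomial.eval_finset_sum, Polynomial.eval_mul, Polynomial.eval_C,
    Polynomial.eval_prod, Polynomial.eval_add, Polynomial.eval_X, Polynomial.eval_zero] at hj
  rw [Finset.sum_eq_single j] at hj
  · have hprod : ∏ k ∈ Finset.univ.erase j, (-(y j) + y k) ≠ 0 := by
      apply Finset.prod_ne_zero_iff.mpr
      intro k hk
      have : y k ≠ y j := fun hc => (Finset.mem_erase.mp hk).1 (hy hc)
      intro hc; apply this; linarith
    have := mul_eq_zero.mp hj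
    simpa [hprod] using this
  · intro j' _ hj'
    apply mul_eq_zero_of_right
    apply Finset.prod_eq_zero (Finset.mem_erase.mpr ⟨fun hc => hj' hc.symm, Finset.mem_univ j⟩)
    ring
  · intro hc; exact absurd (Finset.mem_univ j) hc

lemma CS_part1 {n t l : ℕ} (ht : 1 ≤ t) (hl : 1 ≤ l) (hn : 2 * (t + l) ≤ n) :
    ∃ H : Matrix (Fin (2 * (t + l))) (Fin n) ℝ,
      ∀ z : Fin n → ℝ, z ≠ 0 → wt z ≤ 2 * t → 2 * l + 1 ≤ wt (H.mulVec z) := by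
  classical
  set m := 2 * (t + l) with hm
  set H : Matrix (Fin m) (Fin n) ℝ :=
    Matrix.of (fun i j => 1 / ((i : ℝ) + ((j : ℝ) + 1))) with hH
  refine ⟨H, fun z hz hwt => ?_⟩
  by_contra hcon
  push_neg at hcon
  have hwtH : wt (H.mulVec z) ≤ 2 * l := by omega
  set C : Finset (Fin n) := Finset.univ.filter (fun j => z j ≠ 0) with hC
  have hs2 : C.card ≤ 2 * t := hwt
  have hs1 : 1 ≤ C.card := by
    rcases Finset.eq_empty_or_nonempty C with h0 | h0
    · exfalso; apply hz; funext j
      by_contra hzj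
      exact Finset.notMem_empty j (h0 ▸ Finset.mem_filter.mpr ⟨Finset.mem_univ j, hzj⟩)
    · exact Finset.card_pos.mpr h0
  set Z : Finset (Fin m) := Finset.univ.filter (fun i => H.mulVec z i = 0) with hZ
  have hZcard : 2 * t ≤ Z.card := by
    have h2 : Z = (Finset.univ.filter (fun i => H.mulVec z i ≠ 0))ᶜ := by
      ext i; simp [hZ]
    have h3 : Z.card = m - wt (H.mulVec z) := by
      rw [h2, Finset.card_compl, Fintype.card_fin]
      congr 1
    have hwm : wt (H.mulVec z) ≤ m := by
      calc wt (H.mulVec z) ≤ (Finset.univ : Finset (Fin m)).card := Finset.card_filter_le _ _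
        _ = m := by simp
    omega
  obtain ⟨R, hRZ, hRcard⟩ := Finset.exists_subset_card_eq (le_trans hs2 hZcard)
  set f := R.orderEmbOfFin hRcard with hf
  set g := C.orderEmbOfFin rfl with hg
  have hfmem : ∀ i, f i ∈ Z := fun i => hRZ (Finset.orderEmbOfFin_mem R hRcard i)
  have hgmem : ∀ k, z (g k) ≠ 0 := fun k =>
    (Finset.mem_filter.mp (Finset.orderEmbOfFin_mem C rfl k)).2
  have himg : Finset.univ.image g = C := by
    apply Finset.eq_of_subset_of_card_le
    · intro a ha
      obtain ⟨k, _, rfl⟩ := Finset.mem_image.mp ha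
      exact Finset.orderEmbOfFin_mem C rfl k
    · rw [Finset.card_image_of_injective _ g.injective,
        Finset.card_univ, Fintype.card_fin]
  have key : ∀ i, ∑ k, z (g k) / (((f i : Fin m) : ℝ) + (((g k : Fin n) : ℝ) + 1)) = 0 := by
    intro i
    have h0 : H.mulVec z (f i) = 0 := (Finset.mem_filter.mp (hfmem i)).2
    have h1 : H.mulVec z (f i) = ∑ j ∈ C, H (f i) j * z j := by
      rw [Matrix.mulVec, dotProduct]
      symm
      apply Finset.sum_subset (Finset.subset_univ C)
      intro j _ hj
      have hzj : z j = 0 := by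
        by_contra hzj
        exact hj (Finset.mem_filter.mpr ⟨Finset.mem_univ j, hzj⟩)
      rw [hzj, mul_zero]
    have h1' : ∑ k, H (f i) (g k) * z (g k) = ∑ j ∈ C, H (f i) j * z j := by
      have := (Finset.sum_image (s := (Finset.univ : Finset (Fin C.card)))
        (g := (⇑g : Fin C.card → Fin n)) (f := fun j : Fin n => H (f i) j * z j)
        (fun a _ b _ hab => g.injective hab))
      rw [himg] at this
      exact this.symm
    have h2 : ∑ k, z (g k) / (((f i : Fin m) : ℝ) + (((g k : Fin n) : ℝ) + 1))
        = ∑ k, H (f i) (g k) * z (g k) := by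
      refine Finset.sum_congr rfl fun k _ => ?_
      show _ = 1 / (((f i : Fin m) : ℝ) + (((g k : Fin n) : ℝ) + 1)) * z (g k)
      rw [one_div_mul_eq_div]
    rw [h2, h1', ← h1, h0]
  have hxinj : Function.Injective (fun i => ((f i : Fin m) : ℝ)) := by
    intro a b hab
    dsimp only at hab
    have h' : ((f a : Fin m) : ℕ) = ((f b : Fin m) : ℕ) := by exact_mod_cast hab
    exact f.injective (Fin.val_injective h')
  have hyinj : Function.Injective (fun k => (((g k : Fin n) : ℝ) + 1)) := by
    intro a b hab
    dsimp only at hab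
    have h0 : ((g a : Fin n) : ℝ) = ((g b : Fin n) : ℝ) := by linarith
    have h' : ((g a : Fin n) : ℕ) = ((g b : Fin n) : ℕ) := by exact_mod_cast h0
    exact g.injective (Fin.val_injective h')
  have hxy : ∀ i k, ((f i : Fin m) : ℝ) + (((g k : Fin n) : ℝ) + 1) ≠ 0 := by
    intro i k
    positivity
  have hc0 := cauchy_kernel hxinj hyinj hxy key
  exact hgmem ⟨0, hs1⟩ (congrFun hc0 ⟨0, hs1⟩)

lemma CS_part2 {n t l : ℕ} (ht : 1 ≤ t) (hl : 1 ≤ l) (hn : 2 * (t + l) ≤ n)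
    (r : ℕ) (H : Matrix (Fin r) (Fin n) ℝ)
    (hH : ∀ z : Fin n → ℝ, z ≠ 0 → wt z ≤ 2 * t → 2 * l + 1 ≤ wt (H.mulVec z)) :
    2 * (t + l) ≤ r := by
  classical
  by_contra hcon
  push_neg at hcon
  rcases le_or_gt r (2 * l) with hr | hr
  · have hn0 : 0 < n := by omega
    set z : Fin n → ℝ := fun j => if j = ⟨0, hn0⟩ then 1 else 0 with hz
    have h1 : z ≠ 0 := by
      intro hzeq
      have := congrFun hzeq ⟨0, hn0⟩
      simp [hz] at this
    have h2 : wt z ≤ 2 * t := by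
      have hsub : (Finset.univ.filter (fun j => z j ≠ 0)) ⊆ {(⟨0, hn0⟩ : Fin n)} := by
        intro j hj
        have hj' := (Finset.mem_filter.mp hj).2
        simp only [Finset.mem_singleton]
        by_contra hne
        exact hj' (by simp [hz, hne])
      calc wt z ≤ 1 := by simpa [wt] using Finset.card_le_card hsub
        _ ≤ 2 * t := by omega
    have h4 : wt (H.mulVec z) ≤ r := by
      calc wt (H.mulVec z) ≤ (Finset.univ : Finset (Fin r)).card := Finset.card_filter_le _ _
        _ = r := by simp
    have := hH z h1 h2
    omega
  · set k := r - 2 * l with hk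
    have hk1 : 1 ≤ k := by omega
    have hk2 : k ≤ 2 * t - 1 := by omega
    have h2tn : 2 * t ≤ n := by omega
    have hkr : k ≤ r := by omega
    have ht1 : 1 ≤ 2 * t := by omega
    set M : Matrix (Fin (2 * t)) (Fin (2 * t)) ℝ :=
      Matrix.of (fun i j => if h : (i : ℕ) < k then
        H ⟨i, lt_of_lt_of_le h hkr⟩ (Fin.castLE h2tn j) else 0) with hM
    have hdet : M.det = 0 := by
      apply Matrix.det_eq_zero_of_row_eq_zero ⟨2 * t - 1, by omega⟩
      intro j
      simp only [hM, Matrix.of_apply]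
      rw [dif_neg (by simp; omega)]
    obtain ⟨v, hv0, hMv⟩ := Matrix.exists_mulVec_eq_zero_iff.mpr hdet
    set z : Fin n → ℝ := fun j => if h : (j : ℕ) < 2 * t then v ⟨j, h⟩ else 0 with hz
    have hz1 : z ≠ 0 := by
      obtain ⟨p, hp⟩ := Function.ne_iff.mp hv0
      apply Function.ne_iff.mpr
      refine ⟨Fin.castLE h2tn p, ?_⟩
      simp only [hz]
      rw [dif_pos (show ((Fin.castLE h2tn p : Fin n) : ℕ) < 2 * t from p.2)]
      simpa using hp
    have hz2 : wt z ≤ 2 * t := by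
      have hsub : (Finset.univ.filter (fun j => z j ≠ 0))
          ⊆ Finset.univ.image (Fin.castLE h2tn) := by
        intro j hj
        have hj' := (Finset.mem_filter.mp hj).2
        have hlt : (j : ℕ) < 2 * t := by
          by_contra hge
          exact hj' (by simp [hz, hge])
        exact Finset.mem_image.mpr ⟨⟨j, hlt⟩, Finset.mem_univ _, by ext; simp⟩
      calc wt z ≤ _ := Finset.card_le_card hsub
        _ ≤ 2 * t := by
          rw [Finset.card_image_of_injective _ (Fin.castLE_injective h2tn)]
          simp
    have hzero : ∀ i : Fin r, (i : ℕ) < k → H.mulVec z i = 0 := by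
      intro i hik
      have hi2t : (i : ℕ) < 2 * t := by omega
      have hstep : H.mulVec z i = M.mulVec v ⟨i, hi2t⟩ := by
        rw [Matrix.mulVec, dotProduct, Matrix.mulVec, dotProduct]
        rw [show (Finset.univ : Finset (Fin n))
            = Finset.univ.image (Fin.castLE h2tn) ∪
              (Finset.univ \ Finset.univ.image (Fin.castLE h2tn)) from by
          simp [Finset.union_sdiff_of_subset]]
        rw [Finset.sum_union (Finset.disjoint_sdiff)]
        have hrest : ∑ j ∈ Finset.univ \ Finset.univ.image (Fin.castLE h2tn),
            H i j * z j = 0 := by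
          apply Finset.sum_eq_zero
          intro j hj
          have hj' := (Finset.mem_sdiff.mp hj).2
          have hge : ¬ (j : ℕ) < 2 * t := by
            intro hlt
            exact hj' (Finset.mem_image.mpr ⟨⟨j, hlt⟩, Finset.mem_univ _, by ext; simp⟩)
          simp [hz, hge]
        rw [hrest, add_zero,
          Finset.sum_image (fun a _ b _ hab => Fin.castLE_injective h2tn hab)]
        refine Finset.sum_congr rfl fun p _ => ?_
        have hzp : z (Fin.castLE h2tn p) = v p := by
          simp only [hz]
          rw [dif_pos (show ((Fin.castLE h2tn p : Fin n) : ℕ) < 2 * t from p.2)]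
          congr 1
        have hHp : H i (Fin.castLE h2tn p) = M ⟨i, hi2t⟩ p := by
          simp only [hM, Matrix.of_apply]
          rw [dif_pos (show ((⟨(i : ℕ), hi2t⟩ : Fin (2 * t)) : ℕ) < k from hik)]
        rw [hzp, hHp]
      rw [hstep, hMv]
      rfl
    have hwle : wt (H.mulVec z) ≤ 2 * l := by
      have hsub : (Finset.univ.filter (fun i => H.mulVec z i ≠ 0))
          ⊆ Finset.univ.filter (fun i : Fin r => k ≤ (i : ℕ)) := by
        intro i hi
        have hi' := (Finset.mem_filter.mp hi).2
        refine Finset.mem_filter.mpr ⟨Finset.mem_univ _, ?_⟩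
        by_contra hlt
        push_neg at hlt
        exact hi' (hzero i hlt)
      have hcard : (Finset.univ.filter (fun i : Fin r => k ≤ (i : ℕ))).card = r - k := by
        have h1 := Finset.card_filter_add_card_filter_not
          (s := (Finset.univ : Finset (Fin r))) (p := fun i : Fin r => k ≤ (i : ℕ))
        have h2 : (Finset.univ.filter (fun i : Fin r => ¬ k ≤ (i : ℕ))).card = k := by
          have heq : Finset.univ.filter (fun i : Fin r => ¬ k ≤ (i : ℕ))
              = Finset.univ.image (Fin.castLE hkr) := by
            ext i
            constructor
            · intro hi
              have hik : (i : ℕ) < k := by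
                have := (Finset.mem_filter.mp hi).2; omega
              exact Finset.mem_image.mpr ⟨⟨i, hik⟩, Finset.mem_univ _, Fin.ext (by simp)⟩
            · intro hi
              obtain ⟨p, _, rfl⟩ := Finset.mem_image.mp hi
              refine Finset.mem_filter.mpr ⟨Finset.mem_univ _, ?_⟩
              simp only [Fin.coe_castLE, not_le]
              exact p.2
          rw [heq, Finset.card_image_of_injective _ (Fin.castLE_injective hkr)]
          simp
        rw [Finset.card_univ, Fintype.card_fin] at h1
        omega
      have := Finset.card_le_card hsub
      rw [hcard] at this
      calc wt (H.mulVec z) ≤ r - k := this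
        _ = 2 * l := by omega
    have := hH z hz1 hz2
    omega

theorem optimal_CS_matrices_exist {n t l : ℕ} (ht : 1 ≤ t) (hl : 1 ≤ l)
    (hn : 2 * (t + l) ≤ n) :
    (∃ H : Matrix (Fin (2 * (t + l))) (Fin n) ℝ,
      ∀ z : Fin n → ℝ, z ≠ 0 → wt z ≤ 2 * t → 2 * l + 1 ≤ wt (H.mulVec z)) ∧
    (∀ (r : ℕ) (H : Matrix (Fin r) (Fin n) ℝ),
      (∀ z : Fin n → ℝ, z ≠ 0 → wt z ≤ 2 * t → 2 * l + 1 ≤ wt (H.mulVec z)) →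
      2 * (t + l) ≤ r) := by
  exact ⟨CS_part1 ht hl hn, fun r H hH => CS_part2 ht hl hn r H hH⟩
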